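/- Let A ∈ N be a redundancy-free abstract Swiss cheese with δ₁(A) > 0, set M = μ(A), R = ρ(A), let S̃ be the set of all B ∈ N(M,R) partially above A, and let S₁ = {B ∈ S̃ : δ₁(B) = sup_{C ∈ S̃} δ₁(C)}. Then every abstract Swiss cheese in S₁ is semiclassical. -/

import Mathlib

open Metric Set Filter Topology ENNReal

noncomputable section

/-- Abstract Swiss cheese space `F = (ℂ × [0,∞))^{ℕ₀}` with the product topology. -/
abbrev ASC := ℕ → ℂ × NNReal

/-- The centre of the `n`-th disk. -/
def ctr (A : ASC) (n : ℕ) : ℂ := (A n).1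

/-- The radius of the `n`-th disk, as a real number. -/
def rad (A : ASC) (n : ℕ) : ℝ := ((A n).2 : ℝ)

/-- The associated Swiss cheese set `X_A`. -/
def Xset (A : ASC) : Set ℂ :=
  closedBall (ctr A 0) (rad A 0) \ ⋃ n : ℕ, ball (ctr A (n + 1)) (rad A (n + 1))

/-- The significant index set `S_A = {n ≥ 1 : r_n > 0}`. -/
def SIdx (A : ASC) : Set ℕ := {n | 1 ≤ n ∧ 0 < rad A n}

/-- The radius sum function `ρ(A) = ∑_{n≥1} r_n`, valued in `[0,∞]`. -/
def rhoSum (A : ASC) : ℝ≥0∞ := ∑' n : ℕ, ((A (n + 1)).2 : ℝ≥0∞)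

/-- The centre bound function `μ(A) = sup_{n≥1} |a_n|`, valued in `[0,∞]`. -/
def muSup (A : ASC) : ℝ≥0∞ := ⨆ n : ℕ, (‖(A (n + 1)).1‖₊ : ℝ≥0∞)

/-- `H_A(E) = {n ∈ S_A : B̄(a_n, r_n) ∩ E ≠ ∅}`. -/
def HIdx (A : ASC) (E : Set ℂ) : Set ℕ :=
  {n | n ∈ SIdx A ∧ (closedBall (ctr A n) (rad A n) ∩ E).Nonempty}

/-- The local radius sum function `ρ_E(A) = ∑_{n ∈ H_A(E)} r_n`. -/
def rhoLoc (A : ASC) (E : Set ℂ) : ℝ≥0∞ :=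
  ∑' n : HIdx A E, ((A (n : ℕ)).2 : ℝ≥0∞)

/-- The discrepancy function of order 1, `δ₁(A) = r_0 − ∑_{n≥1} r_n ∈ [−∞,∞)`. -/
def delta1 (A : ASC) : EReal := (rad A 0 : EReal) - ((rhoSum A : ℝ≥0∞) : EReal)

/-- The discrepancy function of order `α`, `δ_α(A) = r_0^α − ∑_{n≥1} r_n^α ∈ [−∞,∞)`. -/
def deltaAlpha (α : ℝ) (A : ASC) : EReal :=
  ((((A 0).2 : ℝ≥0∞) ^ α : ℝ≥0∞) : EReal) -
    ((∑' n : ℕ, ((A (n + 1)).2 : ℝ≥0∞) ^ α : ℝ≥0∞) : EReal)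

/-- The discrepancy function of order 2. -/
def delta2 (A : ASC) : EReal := deltaAlpha 2 A

/-- `A` is classical. -/
def IsClassicalASC (A : ASC) : Prop :=
  rhoSum A < ⊤ ∧ 0 < rad A 0 ∧
  ∀ k ∈ SIdx A,
    closedBall (ctr A k) (rad A k) ⊆ ball (ctr A 0) (rad A 0) ∧
    ∀ l ∈ SIdx A, l ≠ k →
      closedBall (ctr A k) (rad A k) ∩ closedBall (ctr A l) (rad A l) = ∅

/-- `A` is semiclassical. -/
def IsSemiclassicalASC (A : ASC) : Prop :=
  rhoSum A < ⊤ ∧ 0 < rad A 0 ∧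
  ∀ k ∈ SIdx A,
    ball (ctr A k) (rad A k) ⊆ ball (ctr A 0) (rad A 0) ∧
    ∀ l ∈ SIdx A, l ≠ k →
      ball (ctr A k) (rad A k) ∩ ball (ctr A l) (rad A l) = ∅

/-- Membership in `N`: finite radius sum and `(r_n)_{n≥1}` non-increasing. -/
def memN (A : ASC) : Prop :=
  rhoSum A < ⊤ ∧ ∀ n : ℕ, 1 ≤ n → (A (n + 1)).2 ≤ (A n).2

/-- Membership in `N(M,R)`. -/
def memNMR (M R : ℝ≥0∞) (A : ASC) : Prop := memN A ∧ muSup A ≤ M ∧ rhoSum A ≤ R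

/-- `A` is redundancy-free. -/
def RedundancyFree (A : ASC) : Prop :=
  ∀ k ∈ SIdx A,
    (ball (ctr A k) (rad A k) ∩ closedBall (ctr A 0) (rad A 0)).Nonempty ∧
    ∀ l ∈ SIdx A, l ≠ k → ¬ ball (ctr A k) (rad A k) ⊆ ball (ctr A l) (rad A l)

/-- `B` is partially above `A`. -/
def PartiallyAbove (B A : ASC) : Prop :=
  closedBall (ctr B 0) (rad B 0) ⊆ closedBall (ctr A 0) (rad A 0) ∧
  ∀ n : ℕ, 1 ≤ n →
    ball (ctr A n) (rad A n) ⊆ (closedBall (ctr B 0) (rad B 0))ᶜ ∨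
    ∃ m : ℕ, 1 ≤ m ∧ ball (ctr A n) (rad A n) ⊆ ball (ctr B m) (rad B m)

/-- The set `S̃` of all `B ∈ N(μ(A), ρ(A))` partially above `A`. -/
def Stilde (A : ASC) : Set ASC :=
  {B | memNMR (muSup A) (rhoSum A) B ∧ PartiallyAbove B A}

/-- `S₁`: the elements of `S̃` on which `δ₁` attains its supremum over `S̃`. -/
def S1 (A : ASC) : Set ASC :=
  {B ∈ Stilde A | delta1 B = sSup (delta1 '' Stilde A)}

/-- `S₂`: the elements of `S₁` on which `δ₂` attains its infimum over `S₁`. -/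
def S2 (A : ASC) : Set ASC :=
  {B ∈ S1 A | delta2 B = sInf (delta2 '' S1 A)}

/-- The (classical) error set `E(A)`. -/
def errSet (A : ASC) : Set ℂ :=
  (⋃ m ∈ SIdx A, ⋃ n ∈ SIdx A, ⋃ (_ : m ≠ n),
    closedBall (ctr A m) (rad A m) ∩ closedBall (ctr A n) (rad A n)) ∪
  ⋃ n ∈ SIdx A, (ball (ctr A 0) (rad A 0))ᶜ ∩ closedBall (ctr A n) (rad A n)

/-- `V(C) = ⋃_{n∈I} U_n`. -/
def VC (I : Set ℕ) (U : ℕ → Set ℂ) : Set ℂ := ⋃ n ∈ I, U n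

/-- `F(C) = ⋃_{n∈I} K_n`. -/
def FC (I : Set ℕ) (K : ℕ → Set ℂ) : Set ℂ := ⋃ n ∈ I, K n

/-- The set `L_A(C)` for a controlling collection `C = ((K_n, U_n))_{n∈I}`. -/
def LSet (A : ASC) (I : Set ℕ) (K U : ℕ → Set ℂ) : Set ASC :=
  {B | memNMR (muSup A) (rhoSum A) B ∧
    (∀ n ∈ I, rhoLoc B (U n) ≤ rhoLoc A (U n)) ∧
    closedBall (ctr B 0) (rad B 0) = closedBall (ctr A 0) (rad A 0) ∧
    (∀ k ∈ SIdx A, closedBall (ctr A k) (rad A k) ∩ VC I U = ∅ →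
      ∃ l ∈ SIdx B, ball (ctr B l) (rad B l) = ball (ctr A k) (rad A k)) ∧
    (∀ n ∈ I, ∀ k ∈ SIdx A, (closedBall (ctr A k) (rad A k) ∩ U n).Nonempty →
      (∃ l ∈ SIdx B, ball (ctr B l) (rad B l) = ball (ctr A k) (rad A k)) ∨
      (∃ l ∈ HIdx B (K n), ball (ctr A k) (rad A k) ⊆ ball (ctr B l) (rad B l)))}

/-- `A` is annular: `a_0 = a_1` and `0 < r_1 < r_0`. -/
def Annular (A : ASC) : Prop := ctr A 0 = ctr A 1 ∧ 0 < rad A 1 ∧ rad A 1 < rad A 0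

/-- The annular radius sum `ρ_a(A) = ∑_{n≥2} r_n`. -/
def rhoAnn (A : ASC) : ℝ≥0∞ := ∑' n : ℕ, ((A (n + 2)).2 : ℝ≥0∞)

/-- The annular discrepancy `δ_a(A) = r_0 − r_1 − 2ρ_a(A)`. -/
def deltaAnn (A : ASC) : EReal :=
  ((rad A 0 - rad A 1 : ℝ) : EReal) - ((2 * rhoAnn A : ℝ≥0∞) : EReal)

/-- The family `Ã` of Lemma 6.4 / Theorem 6.6 (annular classicalisation). -/
def ATilde (A : ASC) : Set ASC :=
  {B | (∀ n : ℕ, 2 ≤ n → (B (n + 1)).2 ≤ (B n).2) ∧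
    rhoAnn B ≤ rhoAnn A ∧ muSup B ≤ muSup A ∧ PartiallyAbove B A ∧
    ctr B 0 = ctr A 0 ∧ ctr B 1 = ctr A 0 ∧
    rad A 1 ≤ rad B 1 ∧ rad B 1 ≤ rad B 0 ∧ rad B 0 ≤ rad A 0}


/-! ### Auxiliary machinery for the proof of Theorem 4.8 -/

section SwissAux

open scoped Classical

/-- Sum over `ℕ` with entry `a` deleted (indices shifted down beyond `a`). -/
lemma aux_tsum_delete (f : ℕ → ℝ≥0∞) (a : ℕ) :
    (∑' n : ℕ, f (if n < a then n else n + 1)) + f a = ∑' n, f n := by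
  have he : Function.Injective (fun n : ℕ => if n < a then n else n + 1) := by
    intro m n h
    simp only at h
    split_ifs at h <;> omega
  have hsupp : Function.support (fun m => if m = a then 0 else f m) ⊆
      Set.range (fun n : ℕ => if n < a then n else n + 1) := by
    intro m hm
    simp only [Function.mem_support] at hm
    rcases lt_trichotomy m a with h | h | h
    · exact ⟨m, by simp [h]⟩
    · simp [h] at hm
    · exact ⟨m - 1, by simp only []; rw [if_neg (by omega)]; omega⟩
  have h2 := he.tsum_eq (f := fun m => if m = a then 0 else f m) hsupp
  have h3 : (fun n : ℕ =>
      (fun m => if m = a then 0 else f m) (if n < a then n else n + 1))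
      = fun n : ℕ => f (if n < a then n else n + 1) := by
    funext n
    simp only []
    rw [if_neg (by split_ifs <;> omega)]
  rw [h3] at h2
  have h2' : (∑' n : ℕ, f (if n < a then n else n + 1))
      = ∑' m : ℕ, if m = a then 0 else f m := h2.trans (tsum_congr fun m => rfl)
  have bridge : (∑' m : ℕ, if m = a then 0 else f m)
      = ∑' m : ℕ, @ite _ (m = a) (Classical.propDecidable _) 0 (f m) :=
    tsum_congr fun m => by by_cases hm : m = a <;> simp [hm]
  rw [h2', bridge, add_comm]
  exact (ENNReal.tsum_eq_add_tsum_ite a).symm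

/-- Sum over `ℕ` with entry `v` inserted at position `a`. -/
lemma aux_tsum_insert (f : ℕ → ℝ≥0∞) (a : ℕ) (v : ℝ≥0∞) :
    (∑' n : ℕ, if n < a then f n else if n = a then v else f (n - 1))
      = v + ∑' n, f n := by
  set h : ℕ → ℝ≥0∞ := fun n => if n < a then f n else if n = a then v else f (n - 1) with hh
  have h0 : h a = v := by simp [hh]
  have he : Function.Injective (fun n : ℕ => if n < a then n else n + 1) := by
    intro m n h
    simp only at h
    split_ifs at h <;> omega
  have hsupp : Function.support (fun m => if m = a then 0 else h m) ⊆
      Set.range (fun n : ℕ => if n < a then n else n + 1) := by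
    intro m hm
    simp only [Function.mem_support] at hm
    rcases lt_trichotomy m a with h | h | h
    · exact ⟨m, by simp [h]⟩
    · simp [h] at hm
    · exact ⟨m - 1, by simp only []; rw [if_neg (by omega)]; omega⟩
  have h2 := he.tsum_eq (f := fun m => if m = a then 0 else h m) hsupp
  have h3 : (fun n : ℕ =>
      (fun m => if m = a then 0 else h m) (if n < a then n else n + 1))
      = fun n : ℕ => f n := by
    funext n
    show (if (if n < a then n else n + 1) = a then 0
        else h (if n < a then n else n + 1)) = f n
    by_cases hn : n < a
    · rw [if_pos hn, if_neg (by omega : ¬ n = a)]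
      show (if n < a then f n else if n = a then v else f (n - 1)) = f n
      rw [if_pos hn]
    · rw [if_neg hn, if_neg (by omega : ¬ n + 1 = a)]
      show (if n + 1 < a then f (n + 1) else if n + 1 = a then v else f (n + 1 - 1)) = f n
      rw [if_neg (by omega), if_neg (by omega)]
      congr 1
  rw [h3] at h2
  have h2' : (∑' n : ℕ, f n) = ∑' m : ℕ, if m = a then 0 else h m :=
    h2.trans (tsum_congr fun m => rfl)
  calc ∑' n, h n
      = h a + ∑' m : ℕ, @ite _ (m = a) (Classical.propDecidable _) 0 (h m) :=
        ENNReal.tsum_eq_add_tsum_ite a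
    _ = v + ∑' n, f n := by
        rw [h0]
        congr 1
        rw [h2']
        exact (tsum_congr fun m => by by_cases hm : m = a <;> simp [hm]).symm

/-- Delete the hole at index `j ≥ 1` (shifting later entries down). -/
def delH (B : ASC) (j : ℕ) : ASC := fun n => if n < j then B n else B (n + 1)

/-- Insert an entry at index `p ≥ 1` (shifting later entries up). -/
def insH (B : ASC) (p : ℕ) (x : ℂ × NNReal) : ASC :=
  fun n => if n < p then B n else if n = p then x else B (n - 1)

/-- Replace the head (outer disc) of an abstract Swiss cheese. -/
def setHd (B : ASC) (x : ℂ × NNReal) : ASC := fun n => if n = 0 then x else B n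

lemma rhoSum_delH (B : ASC) {j : ℕ} (hj : 1 ≤ j) :
    rhoSum (delH B j) + ((B j).2 : ℝ≥0∞) = rhoSum B := by
  have key : rhoSum (delH B j)
      = ∑' n : ℕ, (fun m => ((B (m + 1)).2 : ℝ≥0∞)) (if n < j - 1 then n else n + 1) := by
    refine tsum_congr fun n => ?_
    simp only [delH]
    split_ifs with h1 h2 h2
    · rfl
    · omega
    · omega
    · rfl
  have := aux_tsum_delete (fun m => ((B (m + 1)).2 : ℝ≥0∞)) (j - 1)
  rw [key]
  simpa only [Nat.sub_add_cancel hj, rhoSum] using this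

lemma rhoSum_insH (B : ASC) {p : ℕ} (hp : 1 ≤ p) (x : ℂ × NNReal) :
    rhoSum (insH B p x) = (x.2 : ℝ≥0∞) + rhoSum B := by
  have key : rhoSum (insH B p x)
      = ∑' n : ℕ, if n < p - 1 then ((B (n + 1)).2 : ℝ≥0∞)
          else if n = p - 1 then (x.2 : ℝ≥0∞) else ((B ((n - 1) + 1)).2 : ℝ≥0∞) := by
    refine tsum_congr fun n => ?_
    simp only [insH]
    rcases Nat.lt_trichotomy (n + 1) p with h | h | h
    · rw [if_pos h, if_pos (by omega : n < p - 1)]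
    · rw [if_neg (by omega), if_pos h, if_neg (by omega : ¬ n < p - 1),
        if_pos (by omega : n = p - 1)]
    · rw [if_neg (by omega), if_neg (by omega), if_neg (by omega : ¬ n < p - 1),
        if_neg (by omega : ¬ n = p - 1)]
      have e : n + 1 - 1 = n - 1 + 1 := by omega
      rw [e]
  rw [key]
  exact aux_tsum_insert (fun m => ((B (m + 1)).2 : ℝ≥0∞)) (p - 1) (x.2 : ℝ≥0∞)

lemma rhoSum_setHd (B : ASC) (x : ℂ × NNReal) : rhoSum (setHd B x) = rhoSum B :=
  tsum_congr fun n => by simp [setHd]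

lemma muSup_delH_le (B : ASC) (j : ℕ) : muSup (delH B j) ≤ muSup B := by
  refine iSup_le fun n => ?_
  simp only [delH]
  split_ifs with h
  · exact le_iSup (fun m => (‖(B (m + 1)).1‖₊ : ℝ≥0∞)) n
  · exact le_iSup (fun m => (‖(B (m + 1)).1‖₊ : ℝ≥0∞)) (n + 1)

lemma muSup_insH_le (B : ASC) {p : ℕ} (hp : 1 ≤ p) (x : ℂ × NNReal) :
    muSup (insH B p x) ≤ max (‖x.1‖₊ : ℝ≥0∞) (muSup B) := by
  refine iSup_le fun n => ?_
  simp only [insH]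
  split_ifs with h1 h2
  · exact le_trans (le_iSup (fun m => (‖(B (m + 1)).1‖₊ : ℝ≥0∞)) n) (le_max_right _ _)
  · exact le_max_left _ _
  · have e : n + 1 - 1 = n - 1 + 1 := by omega
    rw [e]
    exact le_trans (le_iSup (fun m => (‖(B (m + 1)).1‖₊ : ℝ≥0∞)) (n - 1)) (le_max_right _ _)

lemma muSup_setHd (B : ASC) (x : ℂ × NNReal) : muSup (setHd B x) = muSup B := by
  refine iSup_congr fun n => ?_
  simp [setHd]

lemma rad_anti {B : ASC} (hB : ∀ n : ℕ, 1 ≤ n → (B (n + 1)).2 ≤ (B n).2) :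
    ∀ a b : ℕ, 1 ≤ a → a ≤ b → (B b).2 ≤ (B a).2 := by
  intro a b ha hab
  induction b with
  | zero => omega
  | succ n ih =>
    rcases Nat.lt_or_ge a (n + 1) with h | h
    · exact le_trans (hB n (by omega)) (ih (by omega))
    · have : a = n + 1 := by omega
      rw [this]

lemma mono_delH {B : ASC} {j : ℕ} (hj : 1 ≤ j)
    (hB : ∀ n : ℕ, 1 ≤ n → (B (n + 1)).2 ≤ (B n).2) :
    ∀ n : ℕ, 1 ≤ n → ((delH B j) (n + 1)).2 ≤ ((delH B j) n).2 := by
  intro n hn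
  simp only [delH]
  split_ifs with h1 h2 h2
  · exact hB n hn
  · omega
  · exact le_trans (hB (n + 1) (by omega)) (hB n hn)
  · exact hB (n + 1) (by omega)

lemma mono_insH {B : ASC} {p : ℕ} {x : ℂ × NNReal} (hp : 1 ≤ p)
    (hB : ∀ n : ℕ, 1 ≤ n → (B (n + 1)).2 ≤ (B n).2)
    (h1 : (B p).2 ≤ x.2) (h2 : ∀ q : ℕ, 1 ≤ q → q < p → x.2 ≤ (B q).2) :
    ∀ n : ℕ, 1 ≤ n → ((insH B p x) (n + 1)).2 ≤ ((insH B p x) n).2 := by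
  intro n hn
  simp only [insH]
  rcases Nat.lt_trichotomy (n + 1) p with h | h | h
  · rw [if_pos h, if_pos (by omega : n < p)]
    exact hB n hn
  · rw [if_neg (by omega), if_pos h, if_pos (by omega : n < p)]
    exact h2 n hn (by omega)
  · rw [if_neg (by omega), if_neg (by omega), if_neg (by omega : ¬ n < p)]
    rcases Nat.lt_trichotomy n p with g | g | g
    · omega
    · rw [if_pos g]
      have e : n + 1 - 1 = p := by omega
      rw [e]
      exact h1
    · rw [if_neg (by omega)]
      have e : n + 1 - 1 = (n - 1) + 1 := by omega
      rw [e]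
      exact hB (n - 1) (by omega)

lemma mono_setHd {B : ASC} {x : ℂ × NNReal}
    (hB : ∀ n : ℕ, 1 ≤ n → (B (n + 1)).2 ≤ (B n).2) :
    ∀ n : ℕ, 1 ≤ n → ((setHd B x) (n + 1)).2 ≤ ((setHd B x) n).2 := by
  intro n hn
  simp only [setHd, if_neg (by omega : ¬ n + 1 = 0), if_neg (by omega : ¬ n = 0)]
  exact hB n hn

lemma delta1_coe {B : ASC} (h : rhoSum B ≠ ⊤) :
    delta1 B = ((rad B 0 - (rhoSum B).toReal : ℝ) : EReal) := by
  unfold delta1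
  rw [EReal.coe_sub]
  congr 1
  rw [← ENNReal.coe_toNNReal h, EReal.coe_nnreal_eq_coe_real]
  rfl

lemma hole_le_rhoSum (B : ASC) {k : ℕ} (hk : 1 ≤ k) : ((B k).2 : ℝ≥0∞) ≤ rhoSum B := by
  have h := ENNReal.le_tsum (f := fun n => ((B (n + 1)).2 : ℝ≥0∞)) (k - 1)
  simpa [Nat.sub_add_cancel hk, rhoSum] using h

/-- Move A: if a hole of `B` pokes out of the open outer disc, shrink and translate the
outer disc away from the hole and delete the hole; this strictly increases `δ₁`. -/
lemma moveA (A B : ASC) (hBmem : memNMR (muSup A) (rhoSum A) B) (hPA : PartiallyAbove B A)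
    (hρ : (rhoSum B).toReal < rad B 0)
    {k : ℕ} (hk1 : 1 ≤ k) (hkpos : 0 < rad B k)
    (hnot : ¬ ball (ctr B k) (rad B k) ⊆ ball (ctr B 0) (rad B 0)) :
    ∃ B' ∈ Stilde A, delta1 B < delta1 B' := by
  obtain ⟨⟨hfin, hmono⟩, hmu, hrho⟩ := hBmem
  have hfin' : rhoSum B ≠ ⊤ := hfin.ne
  have hskρ : rad B k ≤ (rhoSum B).toReal := by
    have h := ENNReal.toReal_mono hfin' (hole_le_rhoSum B hk1)
    simpa [rad] using h
  have hsk_lt : rad B k < rad B 0 := lt_of_le_of_lt hskρ hρ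
  set d := dist (ctr B k) (ctr B 0) with hd
  have hd0 : 0 < d := by
    rcases (dist_nonneg : 0 ≤ d).lt_or_eq with h | h
    · exact h
    · exfalso
      apply hnot
      have hc : ctr B k = ctr B 0 := by rw [← dist_eq_zero]; exact h.symm
      rw [hc]
      exact ball_subset_ball hsk_lt.le
  have hds : rad B 0 < d + rad B k := by
    by_contra hcon
    push_neg at hcon
    exact hnot (ball_subset_ball' (by linarith))
  set t := max 0 ((rad B 0 + rad B k - d) / 2) with ht
  have ht0 : (0 : ℝ) ≤ t := le_max_left _ _
  have htk : t < rad B k := max_lt hkpos (by linarith)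
  have ht2 : rad B 0 + rad B k - d ≤ 2 * t := by
    have h := le_max_right (0 : ℝ) ((rad B 0 + rad B k - d) / 2)
    have h2 : (rad B 0 + rad B k - d) / 2 ≤ t := h
    linarith
  have hts0 : t < rad B 0 := lt_trans htk hsk_lt
  set c0 : ℂ := ctr B 0 + ((t / d : ℝ) : ℂ) * (ctr B 0 - ctr B k) with hc0
  have htd : (0 : ℝ) ≤ t / d := div_nonneg ht0 hd0.le
  have hnorm : ‖ctr B 0 - ctr B k‖ = d := by
    rw [← dist_eq_norm, dist_comm]
  have hdist1 : dist c0 (ctr B 0) = t := by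
    rw [dist_eq_norm]
    have e : c0 - ctr B 0 = ((t / d : ℝ) : ℂ) * (ctr B 0 - ctr B k) := by rw [hc0]; ring
    rw [e, norm_mul, Complex.norm_real, Real.norm_eq_abs, hnorm, abs_of_nonneg htd]
    field_simp
  have hdist2 : dist c0 (ctr B k) = d + t := by
    rw [dist_eq_norm]
    have e : c0 - ctr B k = ((1 + t / d : ℝ) : ℂ) * (ctr B 0 - ctr B k) := by
      rw [hc0]; push_cast; ring
    rw [e, norm_mul, Complex.norm_real, Real.norm_eq_abs, hnorm,
      abs_of_nonneg (by linarith : (0 : ℝ) ≤ 1 + t / d)]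
    field_simp
  set s0' : NNReal := Real.toNNReal (rad B 0 - t) with hs0'
  set B' := setHd (delH B k) (c0, s0') with hB'
  have hctr0 : ctr B' 0 = c0 := rfl
  have hrad0 : rad B' 0 = rad B 0 - t := by
    show ((Real.toNNReal (rad B 0 - t) : NNReal) : ℝ) = rad B 0 - t
    exact Real.coe_toNNReal _ (by linarith)
  have hB'm : ∀ m : ℕ, 1 ≤ m → B' m = delH B k m := by
    intro m hm
    show (if m = 0 then _ else delH B k m) = delH B k m
    rw [if_neg (by omega)]
  have hsum : rhoSum (delH B k) + ((B k).2 : ℝ≥0∞) = rhoSum B := rhoSum_delH B hk1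
  have hrs : rhoSum B' = rhoSum (delH B k) := rhoSum_setHd _ _
  have hleB : rhoSum B' ≤ rhoSum B := by
    rw [hrs, ← hsum]
    exact self_le_add_right _ _
  have hfin2 : rhoSum B' ≠ ⊤ := (lt_of_le_of_lt hleB hfin).ne
  have htoReal : (rhoSum B').toReal = (rhoSum B).toReal - rad B k := by
    have h := congrArg ENNReal.toReal hsum
    rw [ENNReal.toReal_add (by rw [← hrs]; exact hfin2) ENNReal.coe_ne_top] at h
    have h2 : ((((B k).2 : ℝ≥0∞)).toReal) = rad B k := by simp [rad]
    rw [h2] at h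
    rw [hrs]
    linarith
  -- the outer disc of B' sits inside that of B
  have hsub0 : closedBall (ctr B' 0) (rad B' 0) ⊆ closedBall (ctr B 0) (rad B 0) := by
    apply closedBall_subset_closedBall'
    rw [hrad0, hctr0, hdist1]
    linarith
  -- the deleted hole misses the new outer closed disc
  have hmiss : ball (ctr B k) (rad B k) ⊆ (closedBall (ctr B' 0) (rad B' 0))ᶜ := by
    intro z hz
    rw [mem_ball] at hz
    rw [mem_compl_iff, mem_closedBall, not_le, hrad0, hctr0]
    have htri : dist c0 (ctr B k) ≤ dist c0 z + dist z (ctr B k) := dist_triangle _ _ _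
    rw [hdist2] at htri
    have : dist z c0 = dist c0 z := dist_comm _ _
    linarith
  refine ⟨B', ⟨⟨⟨lt_of_le_of_lt hleB hfin, mono_setHd (mono_delH hk1 hmono)⟩,
      ?_, le_trans hleB hrho⟩, ?_, ?_⟩, ?_⟩
  · -- muSup
    have h1 : muSup B' = muSup (delH B k) := muSup_setHd _ _
    rw [h1]
    exact le_trans (muSup_delH_le B k) hmu
  · -- outer disc containment
    exact hsub0.trans hPA.1
  · -- holes of A are handled
    intro n hn
    rcases hPA.2 n hn with hcase | ⟨m, hm1, hmsub⟩
    · left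
      exact hcase.trans (compl_subset_compl.2 hsub0)
    · by_cases hmk : m = k
      · left
        subst hmk
        exact hmsub.trans hmiss
      · right
        refine ⟨if m < k then m else m - 1, by split_ifs <;> omega, ?_⟩
        have heq : B' (if m < k then m else m - 1) = B m := by
          rw [hB'm _ (by split_ifs <;> omega)]
          by_cases h : m < k
          · rw [if_pos h]
            show (if m < k then B m else B (m + 1)) = B m
            rw [if_pos h]
          · rw [if_neg h]
            show (if m - 1 < k then B (m - 1) else B (m - 1 + 1)) = B m
            rw [if_neg (by omega)]
            congr 1
            omega
        have hball : ball (ctr B' (if m < k then m else m - 1))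
            (rad B' (if m < k then m else m - 1)) = ball (ctr B m) (rad B m) := by
          unfold ctr rad
          rw [heq]
        rw [hball]
        exact hmsub
  · -- delta1 strictly increases
    rw [delta1_coe hfin', delta1_coe hfin2, hrad0, htoReal]
    exact EReal.coe_lt_coe_iff.2 (by linarith)

/-- Move B: two intersecting holes of `B` can be merged into a single hole of strictly
smaller total radius; this strictly increases `δ₁`. -/
lemma moveB (A B : ASC) (hBmem : memNMR (muSup A) (rhoSum A) B) (hPA : PartiallyAbove B A)
    {i j : ℕ} (hij : i < j) (hi1 : 1 ≤ i) (hipos : 0 < rad B i) (hjpos : 0 < rad B j)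
    (hmeet : (ball (ctr B i) (rad B i) ∩ ball (ctr B j) (rad B j)).Nonempty) :
    ∃ B' ∈ Stilde A, delta1 B < delta1 B' := by
  obtain ⟨⟨hfin, hmono⟩, hmu, hrho⟩ := hBmem
  have hfin' : rhoSum B ≠ ⊤ := hfin.ne
  have hj1 : 1 ≤ j := by omega
  have hji : rad B j ≤ rad B i := NNReal.coe_le_coe.2 (rad_anti hmono i j hi1 hij.le)
  set d := dist (ctr B i) (ctr B j) with hd
  have hd0 : (0 : ℝ) ≤ d := dist_nonneg
  have hdlt : d < rad B i + rad B j := by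
    obtain ⟨z, hzi, hzj⟩ := hmeet
    rw [mem_ball] at hzi hzj
    have h1 := dist_triangle (ctr B i) z (ctr B j)
    have h2 : dist (ctr B i) z = dist z (ctr B i) := dist_comm _ _
    linarith
  set v := max (rad B i) ((rad B i + rad B j + d) / 2) with hv
  have hv1 : rad B i ≤ v := le_max_left _ _
  have hv4 : (rad B i + rad B j + d) / 2 ≤ v := le_max_right _ _
  have hv2 : v < rad B i + rad B j := max_lt (by linarith) (by linarith)
  have hv3 : v ≤ rad B i + d := max_le (by linarith) (by linarith)
  have hv0 : (0 : ℝ) < v := lt_of_lt_of_le hipos hv1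
  set lam := (v - rad B i) / d with hlam
  have hlam0 : 0 ≤ lam := div_nonneg (by linarith) hd0
  have hlamd : lam * d = v - rad B i ∨ (d = 0 ∧ lam = 0) := by
    rcases eq_or_ne d 0 with h | h
    · right; exact ⟨h, by rw [hlam, h]; simp⟩
    · left; rw [hlam]; field_simp
  have hlam1 : lam ≤ 1 := by
    rcases eq_or_ne d 0 with h | h
    · rw [hlam, h]; simp
    · rw [hlam]
      apply div_le_one_of_le₀ (by linarith) (by positivity)
  set c : ℂ := ctr B i + ((lam : ℝ) : ℂ) * (ctr B j - ctr B i) with hc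
  have hnormji : ‖ctr B j - ctr B i‖ = d := by rw [← dist_eq_norm, dist_comm]
  have hci : dist c (ctr B i) ≤ v - rad B i := by
    rw [dist_eq_norm]
    have e : c - ctr B i = ((lam : ℝ) : ℂ) * (ctr B j - ctr B i) := by rw [hc]; ring
    rw [e, norm_mul, Complex.norm_real, Real.norm_eq_abs, hnormji, abs_of_nonneg hlam0]
    rcases hlamd with h | ⟨h1, h2⟩
    · rw [h]
    · rw [h1, mul_zero]; linarith
  have hcj : dist c (ctr B j) ≤ v - rad B j := by
    rw [dist_eq_norm]
    have e : c - ctr B j = ((1 - lam : ℝ) : ℂ) * (ctr B i - ctr B j) := by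
      rw [hc]; push_cast; ring
    rw [e, norm_mul, Complex.norm_real, Real.norm_eq_abs, ← dist_eq_norm, ← hd,
      abs_of_nonneg (by linarith : (0 : ℝ) ≤ 1 - lam)]
    rcases hlamd with h | ⟨h1, h2⟩
    · have : (1 - lam) * d = d - (v - rad B i) := by rw [mul_comm] at h ⊢; nlinarith [h]
      rw [this]
      linarith
    · rw [h1, mul_zero]; linarith
  have hsubi : ball (ctr B i) (rad B i) ⊆ ball c v := by
    apply ball_subset_ball'
    rw [dist_comm]
    linarith
  have hsubj : ball (ctr B j) (rad B j) ⊆ ball c v := by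
    apply ball_subset_ball'
    rw [dist_comm]
    linarith
  have hcnorm : ‖c‖ ≤ max ‖ctr B i‖ ‖ctr B j‖ := by
    have e : c = ((1 - lam : ℝ) : ℂ) * ctr B i + ((lam : ℝ) : ℂ) * ctr B j := by
      rw [hc]; push_cast; ring
    have h1 : ‖c‖ ≤ (1 - lam) * ‖ctr B i‖ + lam * ‖ctr B j‖ := by
      rw [e]
      refine (norm_add_le _ _).trans ?_
      rw [norm_mul, norm_mul, Complex.norm_real, Complex.norm_real, Real.norm_eq_abs,
        Real.norm_eq_abs, abs_of_nonneg (by linarith : (0 : ℝ) ≤ 1 - lam),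
        abs_of_nonneg hlam0]
    have h2 : ‖ctr B i‖ ≤ max ‖ctr B i‖ ‖ctr B j‖ := le_max_left _ _
    have h3 : ‖ctr B j‖ ≤ max ‖ctr B i‖ ‖ctr B j‖ := le_max_right _ _
    nlinarith [norm_nonneg (ctr B i), norm_nonneg (ctr B j)]
  set vn : NNReal := Real.toNNReal v with hvn
  have hvcoe : (vn : ℝ) = v := Real.coe_toNNReal _ hv0.le
  have hBi_le : (B i).2 ≤ vn := by
    rw [← NNReal.coe_le_coe, hvcoe]
    exact hv1
  have hex : ∃ q : ℕ, 1 ≤ q ∧ (B q).2 ≤ vn := ⟨i, hi1, hBi_le⟩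
  set p := Nat.find hex with hp
  have hp1 : 1 ≤ p := (Nat.find_spec hex).1
  have hpv : (B p).2 ≤ vn := (Nat.find_spec hex).2
  have hple : p ≤ i := Nat.find_min' hex ⟨hi1, hBi_le⟩
  have hmin : ∀ q : ℕ, 1 ≤ q → q < p → vn ≤ (B q).2 := by
    intro q h1 h2
    have := Nat.find_min hex h2
    push_neg at this
    exact (this h1).le
  set C := delH (delH B j) i with hC
  have hmonoC : ∀ n : ℕ, 1 ≤ n → (C (n + 1)).2 ≤ (C n).2 :=
    mono_delH hi1 (mono_delH hj1 hmono)
  have hC_eq : ∀ m : ℕ, C m = if m < i then B m else if m + 1 < j then B (m + 1)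
      else B (m + 2) := by
    intro m
    show (if m < i then delH B j m else delH B j (m + 1)) = _
    simp only [delH]
    split_ifs <;> first | rfl | omega | (congr 1; omega)
  have hCp_le : (C p).2 ≤ vn := by
    rw [hC_eq p]
    split_ifs with h1 h2
    · exact hpv
    · exact le_trans (rad_anti hmono p (p + 1) hp1 (by omega)) hpv
    · exact le_trans (rad_anti hmono p (p + 2) hp1 (by omega)) hpv
  have hCq_ge : ∀ q : ℕ, 1 ≤ q → q < p → vn ≤ (C q).2 := by
    intro q h1 h2
    rw [hC_eq q, if_pos (by omega)]
    exact hmin q h1 h2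
  set B' := insH C p (c, vn) with hB'
  have hmono' : ∀ n : ℕ, 1 ≤ n → (B' (n + 1)).2 ≤ (B' n).2 :=
    mono_insH hp1 hmonoC hCp_le hCq_ge
  -- head is unchanged
  have hB'0 : B' 0 = B 0 := by
    show (if 0 < p then C 0 else _) = B 0
    rw [if_pos (by omega)]
    rw [hC_eq 0, if_pos (by omega)]
  -- the new hole
  have hB'p : B' p = (c, vn) := by
    show (if p < p then _ else if p = p then (c, vn) else _) = (c, vn)
    rw [if_neg (by omega), if_pos rfl]
  -- rhoSum bookkeeping
  have hdji : delH B j i = B i := by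
    show (if i < j then B i else B (i + 1)) = B i
    rw [if_pos hij]
  have hX1 : rhoSum (delH B j) + ((B j).2 : ℝ≥0∞) = rhoSum B := rhoSum_delH B hj1
  have hX2 : rhoSum C + ((B i).2 : ℝ≥0∞) = rhoSum (delH B j) := by
    have h := rhoSum_delH (delH B j) hi1
    rwa [hdji] at h
  have hX1fin : rhoSum (delH B j) ≠ ⊤ := by
    refine (lt_of_le_of_lt ?_ hfin).ne
    rw [← hX1]
    exact self_le_add_right _ _
  have hX2fin : rhoSum C ≠ ⊤ := by
    refine ne_of_lt (lt_of_le_of_lt ?_ (lt_top_iff_ne_top.2 hX1fin))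
    rw [← hX2]
    exact self_le_add_right _ _
  have hrsB' : rhoSum B' = (vn : ℝ≥0∞) + rhoSum C := rhoSum_insH C hp1 (c, vn)
  have hfin2 : rhoSum B' ≠ ⊤ := by
    rw [hrsB']
    exact ENNReal.add_ne_top.2 ⟨ENNReal.coe_ne_top, hX2fin⟩
  have hX1R : (rhoSum (delH B j)).toReal + rad B j = (rhoSum B).toReal := by
    have h := congrArg ENNReal.toReal hX1
    rw [ENNReal.toReal_add hX1fin ENNReal.coe_ne_top] at h
    simpa [rad] using h
  have hX2R : (rhoSum C).toReal + rad B i = (rhoSum (delH B j)).toReal := by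
    have h := congrArg ENNReal.toReal hX2
    rw [ENNReal.toReal_add hX2fin ENNReal.coe_ne_top] at h
    simpa [rad] using h
  have hB'R : (rhoSum B').toReal = v + (rhoSum C).toReal := by
    rw [hrsB', ENNReal.toReal_add ENNReal.coe_ne_top hX2fin]
    simp [hvcoe]
  have hrhole : (rhoSum B').toReal < (rhoSum B).toReal := by
    rw [hB'R]
    linarith
  have hrs_le : rhoSum B' ≤ rhoSum B := by
    rw [← ENNReal.toReal_le_toReal hfin2 hfin']
    exact hrhole.le
  refine ⟨B', ⟨⟨⟨lt_top_iff_ne_top.2 hfin2, hmono'⟩, ?_, le_trans hrs_le hrho⟩,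
      ?_, ?_⟩, ?_⟩
  · -- muSup
    have h1 : muSup B' ≤ max (‖c‖₊ : ℝ≥0∞) (muSup C) := muSup_insH_le C hp1 (c, vn)
    have h2 : muSup C ≤ muSup B := le_trans (muSup_delH_le _ i) (muSup_delH_le B j)
    have hcB : (‖c‖₊ : ℝ≥0∞) ≤ muSup B := by
      have hni : (‖ctr B i‖₊ : ℝ≥0∞) ≤ muSup B := by
        have h := le_iSup (fun n => (‖(B (n + 1)).1‖₊ : ℝ≥0∞)) (i - 1)
        have e : i - 1 + 1 = i := by omega
        rw [e] at h
        exact h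
      have hnj : (‖ctr B j‖₊ : ℝ≥0∞) ≤ muSup B := by
        have h := le_iSup (fun n => (‖(B (n + 1)).1‖₊ : ℝ≥0∞)) (j - 1)
        have e : j - 1 + 1 = j := by omega
        rw [e] at h
        exact h
      have hnn : ‖c‖₊ ≤ max ‖ctr B i‖₊ ‖ctr B j‖₊ := by
        rw [← NNReal.coe_le_coe]
        push_cast
        simpa using hcnorm
      calc (‖c‖₊ : ℝ≥0∞) ≤ ((max ‖ctr B i‖₊ ‖ctr B j‖₊ : NNReal) : ℝ≥0∞) :=
            ENNReal.coe_le_coe.2 hnn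
        _ ≤ muSup B := by
            rw [ENNReal.coe_max]
            exact max_le hni hnj
    exact le_trans h1 (le_trans (max_le hcB h2) (le_trans le_rfl hmu))
  · -- outer disc containment
    have e1 : ctr B' 0 = ctr B 0 := by unfold ctr; rw [hB'0]
    have e2 : rad B' 0 = rad B 0 := by unfold rad; rw [hB'0]
    rw [e1, e2]
    exact hPA.1
  · -- holes of A are handled
    intro n hn
    have e1 : ctr B' 0 = ctr B 0 := by unfold ctr; rw [hB'0]
    have e2 : rad B' 0 = rad B 0 := by unfold rad; rw [hB'0]
    rcases hPA.2 n hn with hcase | ⟨m, hm1, hmsub⟩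
    · left
      rw [e1, e2]
      exact hcase
    · right
      have hcp : ctr B' p = c := by unfold ctr; rw [hB'p]
      have hrp : rad B' p = v := by unfold rad; rw [hB'p]; exact hvcoe
      by_cases hmi : m = i
      · subst hmi
        exact ⟨p, hp1, by rw [hcp, hrp]; exact hmsub.trans hsubi⟩
      · by_cases hmj : m = j
        · subst hmj
          exact ⟨p, hp1, by rw [hcp, hrp]; exact hmsub.trans hsubj⟩
        · set m' := if m < p then m else if m < i then m + 1 else if m < j then m
            else m - 1 with hm'
          have hm'1 : 1 ≤ m' := by rw [hm']; split_ifs <;> omega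
          have heq : B' m' = B m := by
            rcases Nat.lt_or_ge m p with h1 | h1
            · have : m' = m := by rw [hm', if_pos h1]
              rw [this]
              show (if m < p then C m else _) = B m
              rw [if_pos h1, hC_eq m, if_pos (by omega)]
            · rcases Nat.lt_or_ge m i with h2 | h2
              · have : m' = m + 1 := by rw [hm', if_neg (by omega), if_pos h2]
                rw [this]
                show (if m + 1 < p then _ else if m + 1 = p then _ else C (m + 1 - 1))
                    = B m
                rw [if_neg (by omega), if_neg (by omega)]
                have e : m + 1 - 1 = m := by omega
                rw [e, hC_eq m, if_pos h2]
              · rcases Nat.lt_or_ge m j with h3 | h3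
                · have : m' = m := by
                    rw [hm', if_neg (by omega), if_neg (by omega), if_pos h3]
                  rw [this]
                  show (if m < p then _ else if m = p then _ else C (m - 1)) = B m
                  rw [if_neg (by omega), if_neg (by omega), hC_eq (m - 1),
                    if_neg (by omega), if_pos (by omega)]
                  congr 1
                  omega
                · have : m' = m - 1 := by
                    rw [hm', if_neg (by omega), if_neg (by omega), if_neg (by omega)]
                  rw [this]
                  show (if m - 1 < p then _ else if m - 1 = p then _ else C (m - 1 - 1))
                      = B m
                  rw [if_neg (by omega), if_neg (by omega), hC_eq (m - 1 - 1),
                    if_neg (by omega), if_neg (by omega)]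
                  congr 1
                  omega
          refine ⟨m', hm'1, ?_⟩
          have hball : ball (ctr B' m') (rad B' m') = ball (ctr B m) (rad B m) := by
            unfold ctr rad
            rw [heq]
          rw [hball]
          exact hmsub
  · -- delta1 strictly increases
    have e2 : rad B' 0 = rad B 0 := by unfold rad; rw [hB'0]
    rw [delta1_coe hfin', delta1_coe hfin2, e2]
    exact EReal.coe_lt_coe_iff.2 (by linarith)

end SwissAux

/-- Theorem 4.8: all abstract Swiss cheeses in `S₁` are semiclassical. -/
theorem stmt9 (A : ASC) (hN : memN A) (hrf : RedundancyFree A) (hd : 0 < delta1 A) :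
    ∀ B ∈ S1 A, IsSemiclassicalASC B := by
  intro B hB
  have hBS : B ∈ Stilde A := hB.1
  have hBsup : delta1 B = sSup (delta1 '' Stilde A) := hB.2
  have hle : ∀ C ∈ Stilde A, delta1 C ≤ delta1 B := fun C hC => by
    rw [hBsup]
    exact le_sSup ⟨C, hC, rfl⟩
  have hAmem : A ∈ Stilde A :=
    ⟨⟨hN, le_rfl, le_rfl⟩, subset_rfl, fun n hn => Or.inr ⟨n, hn, subset_rfl⟩⟩
  have hdB : 0 < delta1 B := lt_of_lt_of_le hd (hle A hAmem)
  have hfin : rhoSum B < ⊤ := hBS.1.1.1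
  have hρlt : (rhoSum B).toReal < rad B 0 := by
    rw [delta1_coe hfin.ne] at hdB
    have h0 : ((0 : ℝ) : EReal) < ((rad B 0 - (rhoSum B).toReal : ℝ) : EReal) := by
      exact_mod_cast hdB
    have := EReal.coe_lt_coe_iff.1 h0
    linarith
  refine ⟨hfin, lt_of_le_of_lt ENNReal.toReal_nonneg hρlt, ?_⟩
  intro k hk
  have hk1 : 1 ≤ k := hk.1
  have hk2 : 0 < rad B k := hk.2
  constructor
  · by_contra hnot
    obtain ⟨B', hB'S, hlt⟩ := moveA A B hBS.1 hBS.2 hρlt hk1 hk2 hnot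
    exact absurd (hle B' hB'S) (not_le.2 hlt)
  · intro l hl hlk
    by_contra hne
    have hmeet : (ball (ctr B k) (rad B k) ∩ ball (ctr B l) (rad B l)).Nonempty :=
      Set.nonempty_iff_ne_empty.2 hne
    rcases Nat.lt_or_ge k l with h | h
    · obtain ⟨B', hB'S, hlt⟩ := moveB A B hBS.1 hBS.2 h hk1 hk2 hl.2 hmeet
      exact absurd (hle B' hB'S) (not_le.2 hlt)
    · have h' : l < k := by omega
      have hmeet' : (ball (ctr B l) (rad B l) ∩ ball (ctr B k) (rad B k)).Nonempty := by
        obtain ⟨z, hz1, hz2⟩ := hmeet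
        exact ⟨z, hz2, hz1⟩
      obtain ⟨B', hB'S, hlt⟩ := moveB A B hBS.1 hBS.2 h' hl.1 hl.2 hk2 hmeet'
      exact absurd (hle B' hB'S) (not_le.2 hlt)

end
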